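/- Let a ≥ 4 be an even integer. Then the quotient ⟨a, a+1⟩/(a−1) equals the numerical semigroup generated by the integers a/2 + 1, a/2 + 2, ..., a, a+1 (that is, all integers m with a/2 + 1 ≤ m ≤ a + 1). -/

import Mathlib

private lemma comb_mem (a x y : ℕ) (n : ℕ) (h : n = x * a + y * (a+1)) :
    n ∈ AddSubmonoid.closure ({a, a + 1} : Set ℕ) := by
  rw [AddSubmonoid.mem_closure_pair]
  exact ⟨x, y, by simpa [smul_eq_mul] using h.symm⟩

private lemma mem_comb {a n : ℕ} (h : n ∈ AddSubmonoid.closure ({a, a + 1} : Set ℕ)) :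
    ∃ x y : ℕ, n = x * a + y * (a+1) := by
  rw [AddSubmonoid.mem_closure_pair] at h
  obtain ⟨x, y, hxy⟩ := h
  exact ⟨x, y, by simpa [smul_eq_mul] using hxy.symm⟩

private lemma icc_closure (k : ℕ) : ∀ m : ℕ, k + 1 ≤ m →
    m ∈ AddSubmonoid.closure (Set.Icc (k + 1) (2*k + 1)) := by
  intro m
  induction m using Nat.strong_induction_on with
  | _ m ih =>
    intro hm
    by_cases h : m ≤ 2*k + 1
    · exact AddSubmonoid.subset_closure ⟨hm, h⟩
    · have h1 : m = (k+1) + (m - (k+1)) := by omega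
      rw [h1]
      exact add_mem (AddSubmonoid.subset_closure ⟨le_refl _, by omega⟩)
        (ih (m - (k+1)) (by omega) (by omega))

/-- Proposition 2.8 (even case): for even `a ≥ 4`,
`⟨a, a+1⟩/(a-1)` is generated by the integers `a/2 + 1, a/2 + 2, ..., a, a+1`. -/
theorem quotient_a_a1_by_am1_even
    (a : ℕ) (ha : 4 ≤ a) (heven : Even a) :
    {m : ℕ | (a - 1) * m ∈ AddSubmonoid.closure ({a, a + 1} : Set ℕ)} =
      ↑(AddSubmonoid.closure (Set.Icc (a / 2 + 1) (a + 1))) := by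
  obtain ⟨k, hk⟩ := heven
  have hka : a = 2 * k := by omega
  have hk2 : 2 ≤ k := by omega
  have hdiv : a / 2 = k := by omega
  have hIcc : Set.Icc (a/2+1) (a+1) = Set.Icc (k+1) (2*k+1) := by
    rw [hdiv, hka]
  ext m
  simp only [Set.mem_setOf_eq, SetLike.mem_coe, hIcc]
  constructor
  · intro hmem
    obtain ⟨x, y, hxy⟩ := mem_comb hmem
    rcases Nat.eq_zero_or_pos m with rfl | hm
    · exact AddSubmonoid.zero_mem _
    · apply icc_closure
      by_contra hcon
      push_neg at hcon
      have hm2 : 2 * m ≤ a := by omega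
      have s1 : 1 ≤ a := by omega
      have s2 : 1 ≤ m := hm
      have s3 : m ≤ a := by omega
      have s4 : 2*m ≤ a+1 := by omega
      have heq : (a-1) * m = (m-1) * a + (a - m) := by
        zify [s1, s2, s3]; ring
      have hmod : ((a-1) * m) % a = a - m := by
        rw [heq, Nat.add_comm, Nat.add_mul_mod_self_right,
          Nat.mod_eq_of_lt (by omega)]
      have hymod : y % a = a - m := by
        have h2 : ((a-1) * m) % a = y % a := by
          rw [hxy]
          have h3 : x * a + y * (a + 1) = y + (x + y) * a := by ring
          rw [h3, Nat.add_mul_mod_self_right]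
        omega
      have hy : a - m ≤ y := hymod ▸ Nat.mod_le y a
      have hgt : (a - m) * (a + 1) ≤ (a-1) * m := by
        calc (a - m) * (a+1) ≤ y * (a+1) := Nat.mul_le_mul_right _ hy
        _ ≤ x * a + y * (a+1) := Nat.le_add_left _ _
        _ = (a-1) * m := hxy.symm
      have hcontra : (a-1) * m + a * (a + 1 - 2*m) = (a - m) * (a+1) := by
        zify [s1, s3, s4]; ring
      have hpos : a ≤ a * (a + 1 - 2*m) := Nat.le_mul_of_pos_right a (by omega)
      omega
  · intro hmem
    induction hmem using AddSubmonoid.closure_induction with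
    | mem n hn =>
      obtain ⟨hn1, hn2⟩ := hn
      rcases Nat.lt_or_ge n (a+1) with hna | hna
      · have t1 : a + 1 ≤ 2*n := by omega
        have t2 : n ≤ a := by omega
        have t3 : 1 ≤ a := by omega
        apply comb_mem a (2*n - (a+1)) (a - n)
        zify [t1, t2, t3]; ring
      · have hn' : n = a + 1 := by omega
        apply comb_mem a 0 (a-1)
        rw [hn']; ring
    | zero => simpa using AddSubmonoid.zero_mem _
    | add p q _ _ hp hq =>
      rw [Nat.mul_add]
      exact add_mem hp hq
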